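/- arXiv:2407.18620 — 6 statements merged into one kernel-verified Lean document; each statement's English description precedes it below -/
import Mathlib

section
/- Let w be a word over a linearly ordered alphabet, and let m be the maximum length of any plateau-rollercoaster occurring as a subsequence of w. If s and s' are plateau-rollercoasters of length m embedded in w via index sequences i_1 < i_2 < ... < i_m and j_1 < j_2 < ... < j_m respectively (i.e., s = w[i_1]...w[i_m] and s' = w[j_1]...w[j_m]), then either s ≠ s' as words, or the two index sequences are identical. -/
namespace RollerCoaster

abbrev Word := List ℕ

def weakIncr (u : Word) : Prop := u.Chain' (· ≤ ·)

def weakDecr (u : Word) : Prop := u.Chain' (· ≥ ·)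

def plateauRun (u : Word) : Prop := weakIncr u ∨ weakDecr u

/-- The factor `w[i..j]` (0-indexed, inclusive). -/
def factorAt (w : Word) (i j : ℕ) : Word := (w.drop i).take (j + 1 - i)

/-- `w[i..j]` is a maximal plateau-run: weakly monotone and not extendable
to a weakly monotone factor in either direction. -/
def maxRunAt (w : Word) (i j : ℕ) : Prop :=
  i ≤ j ∧ j < w.length ∧ plateauRun (factorAt w i j) ∧
  (i = 0 ∨ ¬ plateauRun (factorAt w (i - 1) j)) ∧
  (j + 1 = w.length ∨ ¬ plateauRun (factorAt w i (j + 1)))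

/-- Number of distinct letters of a word. -/
def distinctCount (u : Word) : ℕ := u.dedup.length

/-- `w` is a plateau-`k`-rollercoaster: every maximal plateau-run contains
at least `k` distinct letters. -/
def IsPlateauRC (k : ℕ) (w : Word) : Prop :=
  ∀ i j, maxRunAt w i j → k ≤ distinctCount (factorAt w i j)

def subseqAt (w : Word) (idx : List ℕ) : Word := idx.map (fun t => w.getD t 0)

def embeds (w : Word) (idx : List ℕ) : Prop :=
  idx.Pairwise (· < ·) ∧ ∀ t ∈ idx, t < w.length

/-- `w` is a plateau-`(k,h)_ξ`-rollercoaster (`ξ = ↑` iff `up = true`):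
the last (possibly incomplete) run has orientation `ξ` and exactly `h`
distinct letters if `h < k` (at least `k` if `h = k`), and every other
maximal run is a plateau-`k`-run. -/
def IsPRCkh (k h : ℕ) (up : Bool) (w : Word) : Prop :=
  w ≠ [] ∧
  ∃ i, i < w.length ∧
    (if up then
        weakIncr (factorAt w i (w.length - 1)) ∧
          (i = 0 ∨ ¬ weakIncr (factorAt w (i - 1) (w.length - 1)))
      else
        weakDecr (factorAt w i (w.length - 1)) ∧
          (i = 0 ∨ ¬ weakDecr (factorAt w (i - 1) (w.length - 1)))) ∧
    (if h < k then distinctCount (factorAt w i (w.length - 1)) = h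
      else k ≤ distinctCount (factorAt w i (w.length - 1))) ∧
    ∀ i' j', maxRunAt w i' j' →
      (i' = i ∧ j' = w.length - 1) ∨ k ≤ distinctCount (factorAt w i' j')

def upEdge (w : Word) (i j : ℕ) : Prop :=
  i < j ∧ j < w.length ∧ w.getD i 0 < w.getD j 0 ∧
  ∀ j', i < j' → j' < j → ¬ (w.getD i 0 ≤ w.getD j' 0 ∧ w.getD j' 0 ≤ w.getD j 0)

def eqEdge (w : Word) (i j : ℕ) : Prop :=
  i < j ∧ j < w.length ∧ w.getD i 0 = w.getD j 0 ∧
  ∀ j', i < j' → j' < j → w.getD j' 0 ≠ w.getD j 0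

def downEdge (w : Word) (i j : ℕ) : Prop :=
  i < j ∧ j < w.length ∧ w.getD j 0 < w.getD i 0 ∧
  ∀ j', i < j' → j' < j → ¬ (w.getD j 0 ≤ w.getD j' 0 ∧ w.getD j' 0 ≤ w.getD i 0)

def negEdge (w : Word) (i j : ℕ) : Prop :=
  upEdge w i j ∨ eqEdge w i j ∨ downEdge w i j

lemma getD_factorAt (w : Word) (i j p : ℕ) :
    (factorAt w i j).getD p 0 = if p < j + 1 - i then w.getD (i + p) 0 else 0 := by
  simp only [factorAt, List.getD_eq_getElem?_getD, List.getElem?_take, List.getElem?_drop]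
  split <;> simp

lemma length_factorAt (w : Word) (i j : ℕ) :
    (factorAt w i j).length = min (j + 1 - i) (w.length - i) := by
  simp [factorAt]

lemma get_factorAt (w : Word) (i j : ℕ) (p : ℕ) (hp : p < (factorAt w i j).length) :
    (factorAt w i j).get ⟨p, hp⟩ = w.getD (i + p) 0 := by
  have hl := length_factorAt w i j
  rw [List.get_eq_getElem, ← List.getD_eq_getElem _ 0, getD_factorAt, if_pos (by omega)]

lemma getElem_factorAt (w : Word) (i j : ℕ) (p : ℕ) (hp : p < (factorAt w i j).length) :
    (factorAt w i j)[p] = w.getD (i + p) 0 := get_factorAt w i j p hp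

lemma chain'_factorAt (R : ℕ → ℕ → Prop) (w : Word) (i j : ℕ) (hj : j < w.length) :
    (factorAt w i j).Chain' R ↔ ∀ a, i ≤ a → a < j → R (w.getD a 0) (w.getD (a + 1) 0) := by
  rw [List.Chain', List.isChain_iff_getElem]
  have hl : (factorAt w i j).length = j + 1 - i := by rw [length_factorAt]; omega
  constructor
  · intro H a ha1 ha2
    have hp : a - i + 1 < (factorAt w i j).length := by omega
    have := H (a - i) hp
    rw [getElem_factorAt, getElem_factorAt] at this
    have e1 : i + (a - i) = a := by omega
    have e2 : i + (a - i + 1) = a + 1 := by omega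
    rwa [e1, e2] at this
  · intro H p hp
    rw [getElem_factorAt, getElem_factorAt]
    have e2 : i + (p + 1) = i + p + 1 := by omega
    rw [e2]
    exact H (i + p) (by omega) (by omega)

lemma mem_factorAt (w : Word) (i j : ℕ) (hj : j < w.length) (x : ℕ) :
    x ∈ factorAt w i j ↔ ∃ a, i ≤ a ∧ a ≤ j ∧ w.getD a 0 = x := by
  rw [List.mem_iff_getElem]
  have hl : (factorAt w i j).length = j + 1 - i := by rw [length_factorAt]; omega
  constructor
  · rintro ⟨p, hp, rfl⟩
    refine ⟨i + p, by omega, by omega, ?_⟩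
    rw [← List.getD_eq_getElem _ 0, getD_factorAt, if_pos (by omega)]
  · rintro ⟨a, ha1, ha2, rfl⟩
    refine ⟨a - i, by omega, ?_⟩
    rw [← List.getD_eq_getElem _ 0, getD_factorAt, if_pos (by omega)]
    congr 1; omega

section Dup
variable (s : Word) (t : ℕ)

/-- `s` with the letter at position `t` duplicated. -/
def dup : Word := s.take (t + 1) ++ s.drop t

lemma dup_length (ht : t < s.length) : (dup s t).length = s.length + 1 := by
  simp [dup]; omega

lemma dup_getD (ht : t < s.length) (p : ℕ) :
    (dup s t).getD p 0 = if p ≤ t then s.getD p 0 else s.getD (p - 1) 0 := by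
  have hlt : (s.take (t + 1)).length = t + 1 := by rw [List.length_take]; omega
  unfold dup
  by_cases h : p ≤ t
  · rw [if_pos h, List.getD_append _ _ _ _ (by omega)]
    simp only [List.getD_eq_getElem?_getD, List.getElem?_take, if_pos (by omega : p < t + 1)]
  · rw [if_neg h, List.getD_append_right _ _ _ _ (by omega)]
    simp only [List.getD_eq_getElem?_getD, List.getElem?_drop, hlt]
    congr 2
    omega

variable {s t}

lemma dup_fwd (R : ℕ → ℕ → Prop) (hrefl : ∀ x, R x x) (ht : t < s.length)
    (u v u' v' : ℕ)
    (h1 : ∀ p, u' ≤ p → p < v' → p < t → u ≤ p ∧ p < v)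
    (h2 : ∀ p, u' ≤ p → p < v' → t < p → u ≤ p - 1 ∧ p - 1 < v)
    (hR : ∀ a, u ≤ a → a < v → R (s.getD a 0) (s.getD (a + 1) 0)) :
    ∀ p, u' ≤ p → p < v' → R ((dup s t).getD p 0) ((dup s t).getD (p + 1) 0) := by
  intro p hp1 hp2
  rw [dup_getD s t ht, dup_getD s t ht]
  rcases lt_trichotomy p t with h | h | h
  · rw [if_pos (by omega), if_pos (by omega)]
    exact hR p (h1 p hp1 hp2 h).1 (h1 p hp1 hp2 h).2
  · subst h
    rw [if_pos le_rfl, if_neg (by omega)]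
    simp only [Nat.add_sub_cancel]
    exact hrefl _
  · rw [if_neg (by omega), if_neg (by omega)]
    have e : p + 1 - 1 = p - 1 + 1 := by omega
    rw [e]
    exact hR (p - 1) (h2 p hp1 hp2 h).1 (h2 p hp1 hp2 h).2

lemma dup_bwd (R : ℕ → ℕ → Prop) (ht : t < s.length)
    (u v u' v' : ℕ)
    (h1 : ∀ a, u ≤ a → a < v → a + 1 ≤ t → u' ≤ a ∧ a < v')
    (h2 : ∀ a, u ≤ a → a < v → t ≤ a → u' ≤ a + 1 ∧ a + 1 < v')
    (hR : ∀ p, u' ≤ p → p < v' → R ((dup s t).getD p 0) ((dup s t).getD (p + 1) 0)) :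
    ∀ a, u ≤ a → a < v → R (s.getD a 0) (s.getD (a + 1) 0) := by
  intro a ha1 ha2
  by_cases h : a + 1 ≤ t
  · have := hR a (h1 a ha1 ha2 h).1 (h1 a ha1 ha2 h).2
    rwa [dup_getD s t ht, dup_getD s t ht, if_pos (by omega), if_pos (by omega)] at this
  · have := hR (a + 1) (h2 a ha1 ha2 (by omega)).1 (h2 a ha1 ha2 (by omega)).2
    rwa [dup_getD s t ht, dup_getD s t ht, if_neg (by omega), if_neg (by omega),
      Nat.add_sub_cancel, Nat.add_sub_cancel] at this

end Dup




section Dup2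
variable {s : Word} {t : ℕ}

lemma dup_distinct_le (ht : t < s.length) (i j i0 j0 : ℕ) (hij : i ≤ j)
    (hj0 : j0 < s.length)
    (hI0 : (i ≤ t ∧ i0 = i) ∨ (¬ i ≤ t ∧ i0 = i - 1))
    (hJ0 : (j ≤ t ∧ j0 = j) ∨ (¬ j ≤ t ∧ j0 = j - 1)) :
    distinctCount (factorAt s i0 j0) ≤ distinctCount (factorAt (dup s t) i j) := by
  classical
  rw [distinctCount, distinctCount, ← List.card_toFinset, ← List.card_toFinset]
  apply Finset.card_le_card
  intro x hx
  rw [List.mem_toFinset] at hx ⊢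
  rw [mem_factorAt _ _ _ hj0 x] at hx
  obtain ⟨a, ha1, ha2, rfl⟩ := hx
  rw [mem_factorAt _ _ _ (by rw [dup_length s t ht]; omega)]
  by_cases hia : a ≤ t ∧ i ≤ a
  · exact ⟨a, hia.2, by omega, by rw [dup_getD s t ht, if_pos hia.1]⟩
  · have h1 : ¬ (a ≤ t ∧ i ≤ a) := hia
    refine ⟨a + 1, by omega, by omega, ?_⟩
    rw [dup_getD s t ht, if_neg (by omega), Nat.add_sub_cancel]

lemma dup_prc (k : ℕ) (ht : t < s.length) (h : IsPlateauRC k s) :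
    IsPlateauRC k (dup s t) := by
  intro i j hrun
  obtain ⟨hij, hjlen, hpl, hleft, hright⟩ := hrun
  rw [dup_length s t ht] at hjlen hright
  set i0 := if i ≤ t then i else i - 1 with hi0def
  set j0 := if j ≤ t then j else j - 1 with hj0def
  have hI0 : (i ≤ t ∧ i0 = i) ∨ (¬ i ≤ t ∧ i0 = i - 1) := by
    by_cases hh : i ≤ t
    · exact Or.inl ⟨hh, by rw [hi0def, if_pos hh]⟩
    · exact Or.inr ⟨hh, by rw [hi0def, if_neg hh]⟩
  have hJ0 : (j ≤ t ∧ j0 = j) ∨ (¬ j ≤ t ∧ j0 = j - 1) := by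
    by_cases hh : j ≤ t
    · exact Or.inl ⟨hh, by rw [hj0def, if_pos hh]⟩
    · exact Or.inr ⟨hh, by rw [hj0def, if_neg hh]⟩
  clear_value i0 j0
  have hj0n : j0 < s.length := by omega
  have hd : j < (dup s t).length := by rw [dup_length s t ht]; omega
  have hplmain : plateauRun (factorAt s i0 j0) := by
    rcases hpl with hup | hdn
    · exact Or.inl ((chain'_factorAt _ _ _ _ hj0n).mpr
        (dup_bwd _ ht i0 j0 i j (by omega) (by omega)
          ((chain'_factorAt _ _ _ _ hd).mp hup)))
    · exact Or.inr ((chain'_factorAt (· ≥ ·) _ _ _ hj0n).mpr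
        (dup_bwd (· ≥ ·) ht i0 j0 i j (by omega) (by omega)
          ((chain'_factorAt (· ≥ ·) _ _ _ hd).mp hdn)))
  have hmr : maxRunAt s i0 j0 := by
    refine ⟨by omega, hj0n, hplmain, ?_, ?_⟩
    · rcases hleft with h0 | hnp
      · left; omega
      · by_cases hz : i0 = 0
        · exact Or.inl hz
        · refine Or.inr fun hcon => hnp ?_
          rcases hcon with hup | hdn
          · exact Or.inl ((chain'_factorAt _ _ _ _ hd).mpr
              (dup_fwd _ (fun x => le_refl x) ht (i0 - 1) j0 (i - 1) j (by omega) (by omega)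
                ((chain'_factorAt _ _ _ _ hj0n).mp hup)))
          · exact Or.inr ((chain'_factorAt (· ≥ ·) _ _ _ hd).mpr
              (dup_fwd (· ≥ ·) (fun x => le_refl x) ht (i0 - 1) j0 (i - 1) j (by omega) (by omega)
                ((chain'_factorAt (· ≥ ·) _ _ _ hj0n).mp hdn)))
    · by_cases hz : j0 + 1 = s.length
      · exact Or.inl hz
      · refine Or.inr fun hcon => ?_
        rcases hright with h0 | hnp
        · omega
        · apply hnp
          have hjn : j < s.length := by omega
          have hj1 : j + 1 < (dup s t).length := by rw [dup_length s t ht]; omega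
          rcases hcon with hup | hdn
          · exact Or.inl ((chain'_factorAt _ _ _ _ hj1).mpr
              (dup_fwd _ (fun x => le_refl x) ht i0 (j0 + 1) i (j + 1) (by omega) (by omega)
                ((chain'_factorAt _ _ _ _ (by omega : j0 + 1 < s.length)).mp hup)))
          · exact Or.inr ((chain'_factorAt (· ≥ ·) _ _ _ hj1).mpr
              (dup_fwd (· ≥ ·) (fun x => le_refl x) ht i0 (j0 + 1) i (j + 1) (by omega) (by omega)
                ((chain'_factorAt (· ≥ ·) _ _ _ (by omega : j0 + 1 < s.length)).mp hdn)))
  calc k ≤ distinctCount (factorAt s i0 j0) := h i0 j0 hmr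
    _ ≤ distinctCount (factorAt (dup s t) i j) :=
        dup_distinct_le ht i j i0 j0 hij hj0n hI0 hJ0

end Dup2



lemma sorted_getD_le {l : List ℕ} (h : l.Pairwise (· < ·)) (p q : ℕ) (hpq : p ≤ q)
    (hq : q < l.length) : l.getD p 0 ≤ l.getD q 0 := by
  rw [List.getD_eq_getElem _ _ (by omega : p < l.length), List.getD_eq_getElem _ _ hq]
  rcases eq_or_lt_of_le hpq with rfl | hlt
  · exact le_refl _
  · exact le_of_lt ((List.Pairwise.sortedLT h).strictMono_get
      (show (⟨p, by omega⟩ : Fin l.length) < ⟨q, hq⟩ from hlt))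

lemma mem_take_getD {l : List ℕ} {n : ℕ} {a : ℕ} (ha : a ∈ l.take n) :
    ∃ p, p + 1 ≤ n ∧ p < l.length ∧ l.getD p 0 = a := by
  rw [List.mem_iff_getElem] at ha
  obtain ⟨p, hp, hpe⟩ := ha
  have hl : p < l.length := by rw [List.length_take] at hp; omega
  refine ⟨p, by rw [List.length_take] at hp; omega, hl, ?_⟩
  rw [List.getD_eq_getElem _ _ hl, ← List.getElem_take (h := hp), hpe]

lemma mem_drop_getD {l : List ℕ} {n : ℕ} {a : ℕ} (ha : a ∈ l.drop n) :
    ∃ q, n ≤ q ∧ q < l.length ∧ l.getD q 0 = a := by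
  rw [List.mem_iff_getElem] at ha
  obtain ⟨p, hp, hpe⟩ := ha
  have hl : n + p < l.length := by rw [List.length_drop] at hp; omega
  refine ⟨n + p, by omega, hl, ?_⟩
  rw [List.getD_eq_getElem _ _ hl, ← List.getElem_drop (h := hp), hpe]

lemma embeds_sublist (w : Word) (idx : List ℕ) (h : embeds w idx) : (subseqAt w idx).Sublist w := by
  obtain ⟨hs, hb⟩ := h
  have hstrict : StrictMono (fun p => if hp : p < idx.length then idx[p] else w.length + p) := by
    intro a b hab
    dsimp only
    split_ifs with h1 h2 h2
    · exact (List.Pairwise.sortedLT hs).strictMono_get (show (⟨a, by omega⟩ : Fin idx.length) < ⟨b, h2⟩ from hab)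
    · exact lt_of_lt_of_le (hb _ (List.getElem_mem h1)) (by omega)
    · omega
    · omega
  apply List.sublist_of_orderEmbedding_getElem?_eq (OrderEmbedding.ofStrictMono _ hstrict)
  intro ix
  simp only [OrderEmbedding.coe_ofStrictMono]
  by_cases hix : ix < idx.length
  · rw [dif_pos hix]
    rw [subseqAt, List.getElem?_map, List.getElem?_eq_getElem hix,
      List.getElem?_eq_getElem (hb _ (List.getElem_mem hix))]
    simp only [Option.map_some]
    rw [List.getD_eq_getElem _ _ (hb _ (List.getElem_mem hix))]
  · rw [dif_neg hix]
    rw [List.getElem?_eq_none, List.getElem?_eq_none]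
    · omega
    · rw [subseqAt, List.length_map]; omega

lemma key (w : Word) (k m : ℕ)
    (hmax : ∀ s : Word, s.Sublist w → IsPlateauRC k s → s.length ≤ m)
    (I J : List ℕ) (hI : embeds w I) (hJ : embeds w J)
    (hIl : I.length = m) (hJl : J.length = m)
    (hw : subseqAt w I = subseqAt w J) (t : ℕ) (ht : t < m)
    (hlt : I.getD t 0 < J.getD t 0)
    (hIrc : IsPlateauRC k (subseqAt w I)) : False := by
  set s := subseqAt w I with hs
  have hsl : s.length = m := by rw [hs, subseqAt, List.length_map, hIl]
  set idx := I.take (t + 1) ++ J.drop t with hidx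
  have hemb : embeds w idx := by
    constructor
    · rw [hidx, List.pairwise_append]
      refine ⟨hI.1.sublist (List.take_sublist _ _), hJ.1.sublist (List.drop_sublist _ _), ?_⟩
      intro a ha b hb
      obtain ⟨p, hp1, hp2, rfl⟩ := mem_take_getD ha
      obtain ⟨q, hq1, hq2, rfl⟩ := mem_drop_getD hb
      have h1 : I.getD p 0 ≤ I.getD t 0 := sorted_getD_le hI.1 p t (by omega) (by omega)
      have h2 : J.getD t 0 ≤ J.getD q 0 := sorted_getD_le hJ.1 t q (by omega) (by omega)
      omega
    · intro a ha
      rw [hidx, List.mem_append] at ha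
      rcases ha with ha | ha
      · exact hI.2 a (List.mem_of_mem_take ha)
      · exact hJ.2 a (List.mem_of_mem_drop ha)
  have heq : subseqAt w idx = dup s t := by
    rw [hidx, subseqAt, List.map_append, List.map_take, List.map_drop, dup]
    show (subseqAt w I).take (t + 1) ++ (subseqAt w J).drop t = s.take (t + 1) ++ s.drop t
    rw [← hw, ← hs]
  have hrc : IsPlateauRC k (subseqAt w idx) := by
    rw [heq]
    exact dup_prc k (by omega) hIrc
  have hle := hmax (subseqAt w idx) (embeds_sublist w idx hemb) hrc
  rw [subseqAt, List.length_map, hidx, List.length_append, List.length_take,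
    List.length_drop] at hle
  omega


/-- Two embeddings of maximum-length plateau-k-rollercoasters
either spell different words or use identical index sequences. -/
theorem stmt0 (w : Word) (k m : ℕ) (hk : 3 ≤ k)
    (hmax : ∀ s : Word, s.Sublist w → IsPlateauRC k s → s.length ≤ m)
    (hex : ∃ s : Word, s.Sublist w ∧ IsPlateauRC k s ∧ s.length = m)
    (I J : List ℕ) (hI : embeds w I) (hJ : embeds w J)
    (hIl : I.length = m) (hJl : J.length = m)
    (hIrc : IsPlateauRC k (subseqAt w I)) (hJrc : IsPlateauRC k (subseqAt w J)) :
    subseqAt w I ≠ subseqAt w J ∨ I = J := by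
  by_cases hw : subseqAt w I = subseqAt w J
  · right
    by_contra hne
    have hlen : I.length = J.length := by omega
    have hex : ¬ ∀ (n : ℕ) (h1 : n < I.length) (h2 : n < J.length), I[n] = J[n] :=
      fun H => hne (List.ext_getElem hlen H)
    push_neg at hex
    obtain ⟨t, ht1, ht2, hij⟩ := hex
    have e1 : I.getD t 0 = I[t] := List.getD_eq_getElem _ _ ht1
    have e2 : J.getD t 0 = J[t] := List.getD_eq_getElem _ _ ht2
    rcases lt_or_gt_of_ne hij with hlt | hgt
    · exact key w k m hmax I J hI hJ hIl hJl hw t (by omega) (by omega) hIrc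
    · exact key w k m hmax J I hJ hI hJl hIl hw.symm t (by omega) (by omega) hJrc
  · exact Or.inl hw

end RollerCoaster
end

section
/- Let w be a word of length n over a linearly ordered alphabet and k ≥ 3. If s = w[i_1] w[i_2] ... w[i_m] is a plateau-k-rollercoaster subsequence of w of maximum length m, then i_m is the last occurrence in w of the letter w[i_m]; that is, for every index j with i_m < j ≤ n, w[j] ≠ w[i_m]. -/
namespace RollerCoaster

/-! ### Auxiliary lemmas -/

lemma factor_left (s : Word) (a : ℕ) {i j : ℕ} (hi : i ≤ s.length) (hj : j < s.length) :
    factorAt (s ++ [a]) i j = factorAt s i j := by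
  unfold factorAt
  rw [List.drop_append, List.take_append]
  have h1 : i - s.length = 0 := by omega
  have h2 : j + 1 - i - (s.drop i).length = 0 := by
    rw [List.length_drop]; omega
  rw [h1, h2]
  simp

lemma factor_right (s : Word) (a : ℕ) {i : ℕ} (hi : i ≤ s.length) :
    factorAt (s ++ [a]) i s.length = factorAt s i (s.length - 1) ++ [a] := by
  unfold factorAt
  rw [List.drop_append]
  have h1 : i - s.length = 0 := by omega
  rw [h1, List.drop_zero]
  have e1 : (s.drop i ++ [a]).take (s.length + 1 - i) = s.drop i ++ [a] :=
    List.take_of_length_le (by simp; omega)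
  have e2 : (s.drop i).take (s.length - 1 + 1 - i) = s.drop i :=
    List.take_of_length_le (by simp; omega)
  rw [e1, e2]

lemma plateau_of_append_last {u : Word} {a : ℕ} (h : plateauRun (u ++ [a])) :
    plateauRun u := by
  rcases h with h | h
  · exact Or.inl (h.sublist (List.sublist_append_left u [a]))
  · exact Or.inr (h.sublist (List.sublist_append_left u [a]))

lemma plateau_append_getLast {u : Word} (hu : u ≠ []) (h : plateauRun u) :
    plateauRun (u ++ [u.getLast hu]) := by
  rcases h with h | h
  · refine Or.inl ?_
    unfold weakIncr List.Chain'; rw [List.isChain_append]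
    refine ⟨h, List.isChain_singleton _, ?_⟩
    intro x hx y hy
    rw [List.getLast?_eq_getLast (l := u) hu, Option.mem_some_iff] at hx
    simp only [List.head?_cons, Option.mem_some_iff] at hy
    subst hx; subst hy; exact le_refl _
  · refine Or.inr ?_
    unfold weakDecr List.Chain'; rw [List.isChain_append]
    refine ⟨h, List.isChain_singleton _, ?_⟩
    intro x hx y hy
    rw [List.getLast?_eq_getLast (l := u) hu, Option.mem_some_iff] at hx
    simp only [List.head?_cons, Option.mem_some_iff] at hy
    subst hx; subst hy; exact le_refl _

lemma distinct_append_mem (u : Word) (a : ℕ) (ha : a ∈ u) :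
    distinctCount (u ++ [a]) = distinctCount u := by
  unfold distinctCount
  rw [← List.card_toFinset, ← List.card_toFinset]
  congr 1
  rw [List.toFinset_append]
  apply Finset.union_eq_left.mpr
  simp [ha]

lemma getLast_drop' (s : Word) (i : ℕ) (hi : i < s.length) (hs : s ≠ [])
    (hd : s.drop i ≠ []) : (s.drop i).getLast hd = s.getLast hs := by
  have h1 := List.getLast?_eq_getLast (l := s.drop i) hd
  have h2 := List.getLast?_eq_getLast (l := s) hs
  have h3 : (s.drop i).getLast? = s.getLast? := by
    rw [List.getLast?_drop, if_neg (by omega)]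
  rw [h1, h2] at h3
  exact Option.some.inj h3

lemma sublist_of_idx : ∀ (idx : List ℕ) (n : ℕ) (w : Word),
    idx.Pairwise (· < ·) → (∀ t ∈ idx, n ≤ t ∧ t < w.length) →
    (idx.map (fun t => w.getD t 0)).Sublist (w.drop n)
  | [], _, _, _, _ => by simp
  | t :: rest, n, w, hs, hb => by
    have ht := hb t (by simp)
    obtain ⟨hrel, hs'⟩ := List.pairwise_cons.1 hs
    have hrec := sublist_of_idx rest (t + 1) w hs'
      (fun r hr => ⟨hrel r hr, (hb r (by simp [hr])).2⟩)
    have h1 : w.drop t = w.getD t 0 :: w.drop (t + 1) := by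
      rw [List.drop_eq_getElem_cons ht.2, List.getD_eq_getElem _ _ ht.2]
    have h2 : (w.drop n).drop (t - n) = w.drop t := by
      rw [List.drop_drop]; congr 1; omega
    have step1 : (w.getD t 0 :: rest.map (fun t => w.getD t 0)).Sublist (w.drop t) := by
      rw [h1]; exact hrec.cons₂ _
    have step2 : (w.drop t).Sublist (w.drop n) := h2 ▸ List.drop_sublist (t - n) (w.drop n)
    simpa using step1.trans step2

lemma le_getLast_of_sorted : ∀ (l : List ℕ) (h : l ≠ []), l.Pairwise (· < ·) →
    ∀ x ∈ l, x ≤ l.getLast h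
  | [], h, _, _, _ => absurd rfl h
  | [a], _, _, x, hx => by simp_all
  | a :: b :: t, _, hs, x, hx => by
    rw [List.getLast_cons (l := b :: t) (by simp)]
    rcases List.mem_cons.1 hx with rfl | hx
    · exact le_of_lt ((List.pairwise_cons.1 hs).1 _ (List.getLast_mem (by simp)))
    · exact le_getLast_of_sorted (b :: t) (by simp) (List.pairwise_cons.1 hs).2 x hx

/-- Key fact: appending a copy of the final letter to a plateau-k-rollercoaster
again yields a plateau-k-rollercoaster. -/
lemma rc_append_last (k : ℕ) (s : Word) (hs : s ≠ []) (hrc : IsPlateauRC k s) :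
    IsPlateauRC k (s ++ [s.getLast hs]) := by
  set a := s.getLast hs with ha
  set L := s.length with hL
  have hL1 : 1 ≤ L := List.length_pos_iff.2 hs
  intro i j hm
  obtain ⟨hij, hj, hrun, hleft, hright⟩ := hm
  have hlen' : (s ++ [a]).length = L + 1 := by simp [hL]
  rw [hlen'] at hj hright
  by_cases hjL : j < L
  · have hiL : i ≤ L := by omega
    have hmaxs : maxRunAt s i j := by
      refine ⟨hij, hjL, ?_, ?_, ?_⟩
      · rwa [factor_left s a hiL hjL] at hrun
      · rcases hleft with h0 | hnp
        · exact Or.inl h0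
        · exact Or.inr (by rwa [factor_left s a (by omega) hjL] at hnp)
      · by_cases hj1 : j + 1 = L
        · exact Or.inl hj1
        · rcases hright with habs | hnp
          · omega
          · exact Or.inr (by rwa [factor_left s a (by omega) (by omega)] at hnp)
    have := hrc i j hmaxs
    rwa [factor_left s a hiL hjL]
  · have hjeq : j = L := by omega
    subst hjeq
    have hiL : i < L := by
      by_contra hcon
      have hieq : i = L := by omega
      subst hieq
      rcases hleft with h0 | hnp
      · omega
      · apply hnp
        rw [factor_right s a (i := L - 1) (by omega)]
        have hfac : factorAt s (L - 1) (L - 1) = [s.getLast hs] := by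
          unfold factorAt
          have h1 : L - 1 + 1 - (L - 1) = 1 := by omega
          rw [h1, List.drop_eq_getElem_cons (show L - 1 < s.length by omega),
            List.take_succ_cons, List.take_zero, List.getLast_eq_getElem]
        rw [hfac]
        exact Or.inl (by simp [weakIncr, ha, List.Chain'])
    have hfr : factorAt (s ++ [a]) i L = factorAt s i (L - 1) ++ [a] :=
      factor_right s a (by omega)
    have hfe : ∀ i', i' ≤ L - 1 → factorAt s i' (L - 1) = s.drop i' := by
      intro i' h
      unfold factorAt
      apply List.take_of_length_le
      rw [List.length_drop]; omega
    have hdne : s.drop i ≠ [] := by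
      intro hcon
      have := congrArg List.length hcon
      rw [List.length_drop] at this
      simp at this; omega
    have hadrop : a = (s.drop i).getLast hdne := (getLast_drop' s i hiL hs hdne).symm
    have hmaxs : maxRunAt s i (L - 1) := by
      refine ⟨by omega, by omega, ?_, ?_, Or.inl (by omega)⟩
      · rw [hfr] at hrun
        exact plateau_of_append_last hrun
      · rcases hleft with h0 | hnp
        · exact Or.inl h0
        · refine Or.inr ?_
          intro hp
          apply hnp
          rw [factor_right s a (i := i - 1) (by omega)]
          have hdne' : s.drop (i - 1) ≠ [] := by
            intro hcon
            have := congrArg List.length hcon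
            rw [List.length_drop] at this
            simp at this; omega
          have ha' : a = (s.drop (i - 1)).getLast hdne' :=
            (getLast_drop' s (i - 1) (by omega) hs hdne').symm
          rw [hfe (i - 1) (by omega)] at hp ⊢
          rw [ha']
          exact plateau_append_getLast hdne' hp
    have hk := hrc i (L - 1) hmaxs
    rw [hfr, distinct_append_mem]
    · exact hk
    · rw [hfe i (by omega), hadrop]
      exact List.getLast_mem hdne

/-- the last position of a maximum-length plateau-k-rollercoaster
subsequence is the last occurrence of its letter in `w`. -/
theorem stmt1 (w : Word) (k m : ℕ) (hk : 3 ≤ k)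
    (hmax : ∀ s : Word, s.Sublist w → IsPlateauRC k s → s.length ≤ m)
    (I : List ℕ) (hne : I ≠ []) (hI : embeds w I) (hlen : I.length = m)
    (hrc : IsPlateauRC k (subseqAt w I)) :
    ∀ j, I.getLast hne < j → j < w.length →
      w.getD j 0 ≠ w.getD (I.getLast hne) 0 := by
  intro j hj1 hj2 heq
  obtain ⟨hsort, hbnd⟩ := hI
  have hsne : subseqAt w I ≠ [] := by
    simp only [subseqAt, ne_eq, List.map_eq_nil_iff]
    exact hne
  have hlast : (subseqAt w I).getLast hsne = w.getD (I.getLast hne) 0 :=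
    List.getLast_map _
  have hIj : (I ++ [j]).Pairwise (· < ·) := by
    rw [List.pairwise_append]
    refine ⟨hsort, by simp, ?_⟩
    intro x hx y hy
    simp only [List.mem_singleton] at hy
    subst hy
    exact lt_of_le_of_lt (le_getLast_of_sorted I hne hsort x hx) hj1
  have hform : subseqAt w (I ++ [j]) = subseqAt w I ++ [w.getD j 0] := by
    simp [subseqAt]
  have hkey : subseqAt w (I ++ [j])
      = subseqAt w I ++ [(subseqAt w I).getLast hsne] := by
    rw [hform, heq, ← hlast]
  have hsub : (subseqAt w I ++ [(subseqAt w I).getLast hsne]).Sublist w := by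
    rw [← hkey]
    have := sublist_of_idx (I ++ [j]) 0 w hIj
      (fun t ht => by
        rcases List.mem_append.1 ht with h | h
        · exact ⟨Nat.zero_le _, hbnd t h⟩
        · simp only [List.mem_singleton] at h; subst h; exact ⟨Nat.zero_le _, hj2⟩)
    simpa [subseqAt] using this
  have hrc' := rc_append_last k (subseqAt w I) hsne hrc
  have hle := hmax _ hsub hrc'
  have hslen : (subseqAt w I).length = m := by
    rw [subseqAt, List.length_map, hlen]
  rw [List.length_append, List.length_singleton, hslen] at hle
  omega
end RollerCoaster
end

section
/- For a word w over a linearly ordered alphabet and k ≥ 3: if w is a plateau-(k,1)_↑-rollercoaster (its decomposition into maximal runs ends with an increasing run containing exactly 1 distinct letter), then w is either a unary word (all letters equal) or also a plateau-(k,k)_↓-rollercoaster. -/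
namespace RollerCoaster

section Helpers
open List

lemma factorAt_length (w : Word) (a b : ℕ) (hab : a ≤ b) (hb : b < w.length) :
    (factorAt w a b).length = b + 1 - a := by
  simp [factorAt]
  omega

lemma factorAt_getElem (w : Word) (a b t : ℕ) (ht : t < (factorAt w a b).length) :
    (factorAt w a b)[t] = w.getD (a + t) 0 := by
  have ht' : t < (w.drop a).length := by
    have := ht; simp only [factorAt, List.length_take, List.length_drop, lt_min_iff] at this
    simpa using this.2
  have hat : a + t < w.length := by simp at ht'; omega
  simp only [factorAt, List.getElem_take, List.getElem_drop]
  rw [List.getD_eq_getElem _ _ hat]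

lemma factorAt_cons (w : Word) (a b : ℕ) (hab : a ≤ b) (hb : b < w.length) :
    factorAt w a b = w.getD a 0 :: factorAt w (a + 1) b := by
  have ha : a < w.length := lt_of_le_of_lt hab hb
  have h1 : b + 1 - a = (b - a) + 1 := by omega
  have h2 : b + 1 - (a + 1) = b - a := by omega
  rw [factorAt, factorAt, h1, h2, List.drop_eq_getElem_cons ha, List.take_succ_cons,
      List.getD_eq_getElem _ _ ha]

lemma mem_factorAt_s3 (w : Word) (a b t : ℕ) (hat : a ≤ t) (htb : t ≤ b) (hb : b < w.length) :
    w.getD t 0 ∈ factorAt w a b := by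
  have ht : t - a < (factorAt w a b).length := by
    rw [factorAt_length w a b (le_trans hat htb) hb]; omega
  have := factorAt_getElem w a b (t - a) ht
  rw [show a + (t - a) = t by omega] at this
  rw [← this]
  exact List.getElem_mem ht

lemma incr_adj (w : Word) (a b t : ℕ) (h : weakIncr (factorAt w a b))
    (hat : a ≤ t) (htb : t < b) (hb : b < w.length) :
    w.getD t 0 ≤ w.getD (t + 1) 0 := by
  rw [weakIncr, List.Chain', List.isChain_iff_getElem] at h
  have hlen : (factorAt w a b).length = b + 1 - a := factorAt_length w a b (by omega) hb
  have ht : t - a < (factorAt w a b).length - 1 := by omega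
  have := h (t - a) (by omega)
  rw [factorAt_getElem w a b (t - a) (by omega),
      factorAt_getElem w a b (t - a + 1) (by omega)] at this
  rwa [show a + (t - a) = t by omega, show a + (t - a + 1) = t + 1 by omega] at this

lemma const_of_distinctOne (u : Word) (h : distinctCount u = 1) :
    ∀ x ∈ u, ∀ y ∈ u, x = y := by
  rw [distinctCount] at h
  obtain ⟨c, hc⟩ : ∃ c, u.dedup = [c] := List.length_eq_one_iff.mp h
  intro x hx y hy
  have hx' : x ∈ u.dedup := List.mem_dedup.mpr hx
  have hy' : y ∈ u.dedup := List.mem_dedup.mpr hy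
  rw [hc] at hx' hy'
  simp at hx' hy'; omega

lemma chain'_ge_of_const (u : Word) (h : ∀ x ∈ u, ∀ y ∈ u, x = y) :
    u.Chain' (· ≥ ·) := by
  induction u with
  | nil => exact List.isChain_nil
  | cons a l ih =>
    rw [List.Chain', List.isChain_cons]
    constructor
    · intro y hy
      have hyl : y ∈ l := List.mem_of_mem_head? hy
      have := h a (List.mem_cons_self (a := a) (l := l)) y (List.mem_cons_of_mem a hyl)
      exact ge_of_eq this
    · exact ih (fun x hx y hy => h x (List.mem_cons_of_mem a hx) y (List.mem_cons_of_mem a hy))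


end Helpers

/-- a plateau-(k,1)_↑-rollercoaster is unary or also a
plateau-(k,k)_↓-rollercoaster. -/
theorem stmt3 (w : Word) (k : ℕ) (hk : 3 ≤ k) (hne : w ≠ [])
    (h : IsPRCkh k 1 true w) :
    (∀ a ∈ w, ∀ b ∈ w, a = b) ∨ IsPRCkh k k false w := by
  obtain ⟨-, i, hi, hio, hcnt, hruns⟩ := h
  rw [if_pos rfl] at hio
  rw [if_pos (by omega : 1 < k)] at hcnt
  obtain ⟨hinc, hmax⟩ := hio
  set n := w.length with hn
  have hn0 : 0 < n := List.length_pos_iff.mpr hne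
  have hconst := const_of_distinctOne _ hcnt
  by_cases hi0 : i = 0
  · left
    have hw : factorAt w 0 (n - 1) = w := by
      rw [factorAt, List.drop_zero, show n - 1 + 1 - 0 = n by omega, List.take_length]
    subst hi0
    rw [hw] at hconst
    exact hconst
  · right
    have h0i : 0 < i := Nat.pos_of_ne_zero hi0
    have hmax' : ¬ weakIncr (factorAt w (i - 1) (n - 1)) := hmax.resolve_left hi0
    have hin : i ≤ n - 1 := by omega
    have hw1 : n - 1 < n := by omega
    have hcons1 : factorAt w (i - 1) (n - 1) = w.getD (i - 1) 0 :: factorAt w i (n - 1) := by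
      have := factorAt_cons w (i - 1) (n - 1) (by omega) hw1
      rwa [show i - 1 + 1 = i by omega] at this
    have hcons2 : factorAt w i (n - 1) = w.getD i 0 :: factorAt w (i + 1) (n - 1) :=
      factorAt_cons w i (n - 1) hin hw1
    have hlt : w.getD i 0 < w.getD (i - 1) 0 := by
      by_contra hle
      push_neg at hle
      apply hmax'
      rw [weakIncr, hcons1]
      refine List.isChain_cons.mpr ⟨?_, hinc⟩
      intro y hy
      rw [hcons2] at hy
      simp only [List.head?_cons, Option.mem_def, Option.some.injEq] at hy
      omega
    have hdecF : (factorAt w i (n - 1)).Chain' (· ≥ ·) := chain'_ge_of_const _ hconst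
    have hdec1 : (factorAt w (i - 1) (n - 1)).Chain' (· ≥ ·) := by
      rw [hcons1]
      refine List.isChain_cons.mpr ⟨?_, hdecF⟩
      intro y hy
      rw [hcons2] at hy
      simp only [List.head?_cons, Option.mem_def, Option.some.injEq] at hy
      omega
    have hex : ∃ t, (factorAt w t (n - 1)).Chain' (· ≥ ·) := ⟨i - 1, hdec1⟩
    classical
    set i₀ := Nat.find hex with hi₀def
    have hd0 : (factorAt w i₀ (n - 1)).Chain' (· ≥ ·) := Nat.find_spec hex
    have hi₀le : i₀ ≤ i - 1 := Nat.find_le hdec1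
    have hmin : ∀ m, m < i₀ → ¬ (factorAt w m (n - 1)).Chain' (· ≥ ·) :=
      fun m hm => Nat.find_min hex hm
    have hleft : i₀ = 0 ∨ ¬ plateauRun (factorAt w (i₀ - 1) (n - 1)) := by
      by_cases h00 : i₀ = 0
      · exact Or.inl h00
      · refine Or.inr ?_
        rintro (hI | hD)
        · have := incr_adj w (i₀ - 1) (n - 1) (i - 1) hI (by omega) (by omega) hw1
          rw [show i - 1 + 1 = i by omega] at this
          omega
        · exact hmin (i₀ - 1) (by omega) hD
    have hmr : maxRunAt w i₀ (n - 1) :=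
      ⟨by omega, hw1, Or.inr hd0, hleft, Or.inl (by omega)⟩
    have hki₀ : k ≤ distinctCount (factorAt w i₀ (n - 1)) := by
      rcases hruns i₀ (n - 1) hmr with ⟨he, -⟩ | hge
      · omega
      · exact hge
    refine ⟨hne, i₀, by omega, ?_, ?_, ?_⟩
    · rw [if_neg (by simp)]
      exact ⟨hd0, by
        by_cases h00 : i₀ = 0
        · exact Or.inl h00
        · exact Or.inr (hmin (i₀ - 1) (by omega))⟩
    · rw [if_neg (lt_irrefl k)]
      exact hki₀
    · intro i' j' hmr'
      rcases hruns i' j' hmr' with ⟨he1, he2⟩ | hge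
      · exfalso
        subst he1; subst he2
        rcases hmr'.2.2.2.1 with h0 | hnp
        · exact hi0 h0
        · exact hnp (Or.inr hdec1)
      · exact Or.inr hge
end RollerCoaster
end

section
/- In the next-element graph NEG(w) of a word w, distinct paths starting from the first occurrence of their initial letter spell distinct words: if P = (v_{p_1},...,v_{p_j}) and Q = (v_{q_1},...,v_{q_j}) are paths in NEG(w) with p_1 (resp. q_1) the leftmost occurrence in w of the letter w[p_1] (resp. w[q_1]), and w[p_1]w[p_2]...w[p_j] = w[q_1]w[q_2]...w[q_j], then (p_1,...,p_j) = (q_1,...,q_j). -/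
namespace RollerCoaster

lemma neg_key (w : Word) {i a b : ℕ} (hb : negEdge w i b) (hia : i < a) (hab : a < b)
    (hval : w.getD a 0 = w.getD b 0) : False := by
  rcases hb with ⟨_, _, hlt, hmin⟩ | ⟨_, _, heq2, hmin⟩ | ⟨_, _, hlt, hmin⟩
  · exact hmin a hia hab ⟨hval ▸ le_of_lt hlt, le_of_eq hval⟩
  · exact hmin a hia hab hval
  · exact hmin a hia hab ⟨le_of_eq hval.symm, hval ▸ le_of_lt hlt⟩

lemma neg_uniq (w : Word) {i j j' : ℕ} (h : negEdge w i j) (h' : negEdge w i j')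
    (heq : w.getD j 0 = w.getD j' 0) : j = j' := by
  have hij : i < j := by rcases h with ⟨h1,_⟩|⟨h1,_⟩|⟨h1,_⟩ <;> exact h1
  have hij' : i < j' := by rcases h' with ⟨h1,_⟩|⟨h1,_⟩|⟨h1,_⟩ <;> exact h1
  rcases lt_trichotomy j j' with hlt | heq' | hlt
  · exact absurd (neg_key w h' hij hlt heq) id
  · exact heq'
  · exact absurd (neg_key w h hij' hlt heq.symm) id

lemma chain_unique (w : Word) : ∀ (ps : List ℕ) (qs : List ℕ) (a : ℕ),
    (a :: ps).Chain' (negEdge w) → (a :: qs).Chain' (negEdge w) →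
    ps.map (fun t => w.getD t 0) = qs.map (fun t => w.getD t 0) → ps = qs := by
  intro ps
  induction ps with
  | nil =>
    intro qs a _ _ hmap
    exact (List.map_eq_nil_iff.mp hmap.symm).symm
  | cons p ps' ih =>
    intro qs a hpc hqc hmap
    cases qs with
    | nil => simp at hmap
    | cons q qs' =>
      simp only [List.map_cons, List.cons.injEq] at hmap
      have hep : negEdge w a p := (List.isChain_cons_cons.mp hpc).1
      have heq : negEdge w a q := (List.isChain_cons_cons.mp hqc).1
      have hpq : p = q := neg_uniq w hep heq hmap.1
      subst hpq
      have := ih qs' p (List.isChain_cons_cons.mp hpc).2 (List.isChain_cons_cons.mp hqc).2 hmap.2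
      rw [this]

/-- paths in NEG(w) starting at the leftmost occurrence of their
initial letter spell distinct words. -/
theorem stmt7 (w : Word) (ps qs : List ℕ)
    (hpne : ps ≠ []) (hqne : qs ≠ [])
    (hlen : ps.length = qs.length)
    (hp : ps.Chain' (negEdge w)) (hq : qs.Chain' (negEdge w))
    (hpvalid : ∀ t ∈ ps, t < w.length) (hqvalid : ∀ t ∈ qs, t < w.length)
    (hpfirst : ∀ t < ps.head hpne, w.getD t 0 ≠ w.getD (ps.head hpne) 0)
    (hqfirst : ∀ t < qs.head hqne, w.getD t 0 ≠ w.getD (qs.head hqne) 0)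
    (hspell : ps.map (fun t => w.getD t 0) = qs.map (fun t => w.getD t 0)) :
    ps = qs := by
  cases ps with
  | nil => exact absurd rfl hpne
  | cons p ps' =>
    cases qs with
    | nil => exact absurd rfl hqne
    | cons q qs' =>
      simp only [List.map_cons, List.cons.injEq] at hspell
      simp only [List.head_cons] at hpfirst hqfirst
      have hpq : p = q := by
        rcases lt_trichotomy p q with h | h | h
        · exact absurd hspell.1 (hqfirst p h)
        · exact h
        · exact absurd hspell.1.symm (hpfirst q h)
      subst hpq
      rw [chain_unique w ps' qs' p hp hq hspell.2]
end RollerCoaster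
end

section
/- Let W = {w_1, ..., w_m} be a finite set of words over Σ and let s = s' a be a common plateau-(k,h)_↑-rollercoaster of the prefixes w_1[1..i_1], ..., w_m[1..i_m] ending with letter a = w_1[i_1] = ... = w_m[i_m]. Then there is an equally long common plateau-(k,h)_↑-rollercoaster whose embedding in each w_j uses, as its final position, the last occurrence of a in w_j[1..i_j]. -/
namespace RollerCoaster

/-- a common plateau-(k,h)_↑-rollercoaster of the prefixes
`w_j[0..i_j]`, ending with the letter `a = w_j[i_j]`, can be replaced by an
equally long one whose embedding in each `w_j` ends at the last occurrence of
`a` in `w_j[0..i_j]`. -/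
theorem stmt15 (k h m : ℕ) (hk : 3 ≤ k) (hh : 1 ≤ h) (hhk : h ≤ k)
    (ws : Fin m → Word) (ix : Fin m → ℕ)
    (hix : ∀ j, ix j < (ws j).length)
    (s : Word) (hne : s ≠ [])
    (hrc : IsPRCkh k h true s)
    (hlastletter : ∀ j, (ws j).getD (ix j) 0 = s.getLast hne)
    (E : Fin m → List ℕ)
    (hE : ∀ j, (E j).Pairwise (· < ·) ∧ (∀ t ∈ E j, t ≤ ix j) ∧
      (E j).map (fun t => (ws j).getD t 0) = s) :
    ∃ (s' : Word) (_ : s' ≠ []),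
      s'.length = s.length ∧ IsPRCkh k h true s' ∧
      ∀ j, ∃ (idx : List ℕ) (hi : idx ≠ []),
        idx.Pairwise (· < ·) ∧ (∀ t ∈ idx, t ≤ ix j) ∧
        idx.map (fun t => (ws j).getD t 0) = s' ∧
        (ws j).getD (idx.getLast hi) 0 = s.getLast hne ∧
        ∀ t, idx.getLast hi < t → t ≤ ix j →
          (ws j).getD t 0 ≠ s.getLast hne := by
  refine ⟨s, hne, rfl, hrc, fun j => ?_⟩
  obtain ⟨hsort, hle, hmap⟩ := hE j
  have hEne : E j ≠ [] := by
    intro h0; apply hne; rw [← hmap, h0]; rfl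
  set f : ℕ → ℕ := fun t => (ws j).getD t 0 with hf
  set a := s.getLast hne with ha
  set e := (E j).getLast hEne with he
  have heE : e ∈ E j := List.getLast_mem hEne
  have hee : e ≤ ix j := hle e heE
  have hmne : List.map f (E j) ≠ [] := by simp [hEne]
  have hva : f e = a := by
    have h1 : (List.map f (E j)).getLast hmne = f e := List.getLast_map hmne
    have h2 : (List.map f (E j)).getLast? = some (f e) := by
      rw [List.getLast?_eq_getLast hmne, h1]
    rw [hmap] at h2
    rw [List.getLast?_eq_getLast hne] at h2
    exact (Option.some_injective _ h2).symm
  set L := Nat.findGreatest (fun t => f t = a) (ix j) with hL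
  have hLe : e ≤ L := Nat.le_findGreatest (P := fun t => f t = a) hee hva
  have hPL : f L = a := Nat.findGreatest_spec (P := fun t => f t = a) hee hva
  have hLix : L ≤ ix j := Nat.findGreatest_le _
  have hdecomp : (E j).dropLast ++ [e] = E j := List.dropLast_append_getLast hEne
  have hlt : ∀ x ∈ (E j).dropLast, x < e := by
    have hs2 : List.Pairwise (· < ·) ((E j).dropLast ++ [e]) := by rw [hdecomp]; exact hsort
    intro x hx
    exact (List.pairwise_append.mp hs2).2.2 x hx e (List.mem_singleton_self e)
  have hmap2 : List.map f (E j).dropLast ++ [f e] = s := by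
    have : List.map f ((E j).dropLast ++ [e]) = s := by rw [hdecomp]; exact hmap
    simpa using this
  have hgl : ((E j).dropLast ++ [L]).getLast (by simp) = L := by
    rw [List.getLast_append]; simp
  refine ⟨(E j).dropLast ++ [L], by simp, ?_, ?_, ?_, ?_, ?_⟩
  · refine List.pairwise_append.mpr ⟨hsort.sublist (List.dropLast_sublist _),
      List.pairwise_singleton _ _, ?_⟩
    intro x hx b hb
    rw [List.mem_singleton] at hb
    subst hb
    exact lt_of_lt_of_le (hlt x hx) hLe
  · intro t ht
    rcases List.mem_append.mp ht with h1 | h1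
    · exact hle t ((List.dropLast_sublist _).mem h1)
    · rw [List.mem_singleton] at h1; omega
  · rw [List.map_append, List.map_singleton]
    have hfl : f L = f e := by rw [hva]; exact hPL
    rw [hfl]; exact hmap2
  · rw [hgl]; exact hPL
  · rw [hgl]
    intro t h1 h2
    exact Nat.findGreatest_is_greatest (P := fun t => f t = a) (n := ix j) h1 h2
end RollerCoaster
end

section
/- Let w be a word over a linearly ordered alphabet and m the maximum length of a plateau-k-rollercoaster subsequence of w. Then the map sending each maximum-length plateau-k-rollercoaster subsequence (as a word) to its unique embedding index sequence is a bijection between the set of maximum-length plateau-k-rollercoaster subsequences of w and the set of index sequences i_1 < ... < i_m in w for which w[i_1]...w[i_m] is a plateau-k-rollercoaster. In particular, the number of maximum-length plateau-k-rollercoaster subsequences equals the number of such index sequences. -/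
namespace RollerCoaster

lemma chain'_dup {R : ℕ → ℕ → Prop} {a : ℕ} (hR : R a a) (u v : List ℕ) :
    List.Chain' R (u ++ a :: a :: v) ↔ List.Chain' R (u ++ a :: v) := by
  unfold List.Chain'
  rw [List.isChain_append, List.isChain_append, List.isChain_cons_cons]
  simp [hR]

lemma plateauRun_dup {a : ℕ} {u v : List ℕ} :
    plateauRun (u ++ a :: a :: v) ↔ plateauRun (u ++ a :: v) := by
  unfold plateauRun weakIncr weakDecr
  exact or_congr (chain'_dup le_rfl u v) (chain'_dup (R := (· ≥ ·)) le_rfl u v)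

lemma distinctCount_dup (a : ℕ) (u v : List ℕ) :
    distinctCount (u ++ a :: a :: v) = distinctCount (u ++ a :: v) := by
  unfold distinctCount
  rw [← List.card_toFinset, ← List.card_toFinset]
  simp

lemma factor_eq₁ {s : Word} {d i j : ℕ} (hd : d < s.length) (hj : j ≤ d) :
    factorAt (s.take (d+1) ++ s.drop d) i j = factorAt s i j := by
  unfold factorAt
  rw [List.drop_append, List.take_append]
  have hlen : (List.drop i (s.take (d+1))).length = d + 1 - i := by
    simp; omega
  rw [hlen, show j + 1 - i - (d + 1 - i) = 0 by omega, List.take_zero, List.append_nil,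
    List.drop_take, List.take_take, Nat.min_eq_left (by omega : j + 1 - i ≤ d + 1 - i)]

lemma factor_eq₂ {s : Word} {d i j : ℕ} (hd : d < s.length) (hi : d + 1 ≤ i) (hij : i ≤ j) :
    factorAt (s.take (d+1) ++ s.drop d) i j = factorAt s (i-1) (j-1) := by
  unfold factorAt
  rw [List.drop_append]
  rw [List.drop_eq_nil_of_le (by simp; omega : (s.take (d+1)).length ≤ i), List.nil_append,
    List.drop_drop]
  have h2 : d + (i - (s.take (d+1)).length) = i - 1 := by
    simp [Nat.min_eq_left (by omega : d + 1 ≤ s.length)]; omega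
  rw [h2]
  congr 1
  omega

lemma factor_eq₃ {s : Word} {d i j : ℕ} (hd : d < s.length) (hi : i ≤ d) (hj : d < j) :
    factorAt (s.take (d+1) ++ s.drop d) i j
      = (s.drop i).take (d-i) ++ s[d] :: s[d] :: (s.drop (d+1)).take (j-1-d) := by
  unfold factorAt
  rw [List.drop_append, List.take_append]
  have hA : List.drop i (s.take (d+1)) = List.take (d+1-i) (List.drop i s) := by
    rw [List.drop_take]
  have hAlen : (List.drop i (s.take (d+1))).length = d + 1 - i := by simp; omega
  rw [hAlen, hA, List.take_take, Nat.min_eq_right (by omega : d + 1 - i ≤ j + 1 - i)]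
  rw [show i - (s.take (d+1)).length = 0 by simp; omega, List.drop_zero]
  rw [show j + 1 - i - (d + 1 - i) = j - d by omega]
  rw [show d + 1 - i = (d - i) + 1 by omega, List.take_succ]
  rw [List.getElem?_drop, show i + (d - i) = d by omega, List.getElem?_eq_getElem hd]
  rw [List.drop_eq_getElem_cons hd, show j - d = (j - 1 - d) + 1 by omega,
    List.take_succ_cons]
  simp

lemma factor_eq₃' {s : Word} {d i j : ℕ} (hd : d < s.length) (hi : i ≤ d) (hj : d < j) :
    factorAt s i (j-1) = (s.drop i).take (d-i) ++ s[d] :: (s.drop (d+1)).take (j-1-d) := by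
  unfold factorAt
  rw [show j - 1 + 1 - i = (d - i) + ((j - 1 - d) + 1) by omega, List.take_add,
    List.drop_drop, show i + (d - i) = d by omega, List.drop_eq_getElem_cons hd,
    List.take_succ_cons]
lemma isPlateauRC_dup {k : ℕ} {s : Word} (hs : IsPlateauRC k s) {d : ℕ} (hd : d < s.length) :
    IsPlateauRC k (s.take (d+1) ++ s.drop d) := by
  have hlen : (s.take (d+1) ++ s.drop d).length = s.length + 1 := by
    simp; omega
  intro i j hm
  obtain ⟨hij, hjl, hrun, hleft, hright⟩ := hm
  rw [hlen] at hjl hright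
  rcases Nat.lt_trichotomy j d with hjd | rfl | hdj
  · -- j < d : run lies in the prefix
    have hres := hs i j ⟨hij, by omega, by rwa [factor_eq₁ hd (by omega)] at hrun, ?_, ?_⟩
    · rwa [factor_eq₁ hd (by omega)]
    · rcases hleft with h0 | hnp
      · exact Or.inl h0
      · exact Or.inr (by rwa [factor_eq₁ hd (by omega)] at hnp)
    · rcases hright with he | hnp
      · omega
      · exact Or.inr (by rwa [factor_eq₁ hd (by omega)] at hnp)
  · -- j = d : impossible (run cannot end at the first copy)
    rcases hright with he | hnp
    · omega
    · have e3 := factor_eq₃ (s := s) (d := j) (i := i) (j := j + 1) hd hij (by omega)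
      have e3' := factor_eq₃' (s := s) (d := j) (i := i) (j := j + 1) hd hij (by omega)
      simp only [show j + 1 - 1 - j = 0 by omega, List.take_zero,
        show j + 1 - 1 = j by omega] at e3 e3'
      rw [e3] at hnp
      rw [factor_eq₁ hd le_rfl, e3'] at hrun
      exact (hnp (plateauRun_dup.mpr hrun)).elim
  · rcases Nat.lt_or_ge i (d + 1) with hi | hi
    · -- i ≤ d < j : run contains both copies
      have hi : i ≤ d := by omega
      have e3 := factor_eq₃ (s := s) hd hi hdj
      have e3' := factor_eq₃' (s := s) hd hi hdj
      have hres := hs i (j - 1) ⟨by omega, by omega,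
        by rw [e3']; rw [e3] at hrun; exact plateauRun_dup.mp hrun, ?_, ?_⟩
      · rw [e3, distinctCount_dup, ← e3']; exact hres
      · rcases hleft with h0 | hnp
        · exact Or.inl h0
        · refine Or.inr fun hp => hnp ?_
          rw [factor_eq₃ hd (by omega : i - 1 ≤ d) hdj]
          rw [factor_eq₃' hd (by omega : i - 1 ≤ d) hdj] at hp
          exact plateauRun_dup.mpr hp
      · rcases hright with he | hnp
        · exact Or.inl (by omega)
        · refine Or.inr fun hp => hnp ?_
          have e4 := factor_eq₃ (s := s) (d := d) (i := i) (j := j + 1) hd hi (by omega)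
          have e4' := factor_eq₃' (s := s) (d := d) (i := i) (j := j + 1) hd hi (by omega)
          simp only [Nat.add_sub_cancel] at e4 e4'
          rw [e4]
          rw [show j - 1 + 1 = j by omega, e4'] at hp
          exact plateauRun_dup.mpr hp
    · rcases Nat.eq_or_lt_of_le hi with rfl | hi2
      · -- i = d + 1 : impossible (run cannot start at the second copy)
        rcases hleft with h0 | hnp
        · omega
        · have e3 := factor_eq₃ (s := s) (d := d) (i := d) (j := j) hd le_rfl hdj
          have e3' := factor_eq₃' (s := s) (d := d) (i := d) (j := j) hd le_rfl hdj
          simp only [Nat.sub_self, List.take_zero, List.nil_append] at e3 e3'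
          rw [show d + 1 - 1 = d by omega, e3] at hnp
          rw [factor_eq₂ hd le_rfl hij, show d + 1 - 1 = d by omega, e3'] at hrun
          have hdup : plateauRun ([] ++ s[d] :: s[d] :: (s.drop (d+1)).take (j-1-d)) :=
            plateauRun_dup.mpr (by simpa using hrun)
          exact (hnp (by simpa using hdup)).elim
      · -- d + 2 ≤ i : run lies in the (shifted) suffix
        have e2 := factor_eq₂ (s := s) hd (by omega : d + 1 ≤ i) hij
        have hres := hs (i-1) (j-1) ⟨by omega, by omega, by rwa [e2] at hrun, ?_, ?_⟩
        · rwa [e2]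
        · refine Or.inr ?_
          rcases hleft with h0 | hnp
          · omega
          · have e2' := factor_eq₂ (s := s) hd (by omega : d + 1 ≤ i - 1)
              (by omega : i - 1 ≤ j)
            rwa [e2'] at hnp
        · rcases hright with he | hnp
          · exact Or.inl (by omega)
          · refine Or.inr ?_
            have e2'' := factor_eq₂ (s := s) hd (by omega : d + 1 ≤ i) (by omega : i ≤ j + 1)
            rw [show j + 1 - 1 = j by omega] at e2''
            rw [show j - 1 + 1 = j by omega]
            rwa [e2''] at hnp
lemma subseqAt_sublist {w : Word} {idx : List ℕ} (h : embeds w idx) :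
    (subseqAt w idx).Sublist w := by
  obtain ⟨hs, hb⟩ := h
  have h2 : subseqAt w idx
      = (idx.pmap (fun t ht => (⟨t, ht⟩ : Fin w.length)) hb).map (fun x => w[x]) := by
    rw [List.map_pmap]
    unfold subseqAt
    rw [← List.pmap_eq_map (p := fun t => t < w.length) (f := fun t => w.getD t 0) (l := idx) hb]
    exact List.pmap_congr_left _ (fun a ha h1 h2 => (List.getD_eq_getElem w 0 h1).symm) |>.symm
  rw [h2]
  exact List.map_getElem_sublist ((List.pairwise_pmap hb).mpr
    (hs.imp_of_mem (fun ha hb' hab => fun h1 h2 => hab)))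

lemma exists_embedding {s w : Word} (h : s.Sublist w) :
    ∃ idx : List ℕ, embeds w idx ∧ idx.length = s.length ∧ subseqAt w idx = s := by
  induction h with
  | slnil => exact ⟨[], ⟨List.Pairwise.nil, by simp⟩, rfl, rfl⟩
  | @cons l₁ l₂ a h ih =>
      obtain ⟨idx, ⟨hso, hb⟩, hlen, hsub⟩ := ih
      refine ⟨idx.map (· + 1), ⟨?_, ?_⟩, by simp [hlen], ?_⟩
      · exact hso.map _ (fun x y hxy => by omega)
      · intro t ht
        simp only [List.mem_map] at ht
        obtain ⟨u, hu, rfl⟩ := ht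
        have := hb u hu
        simp; omega
      · unfold subseqAt at hsub ⊢
        rw [List.map_map]
        have hc : ((fun t => (a :: l₂).getD t 0) ∘ fun x => x + 1)
            = fun t => l₂.getD t 0 := by
          funext t; exact List.getD_cons_succ
        rw [hc, hsub]
  | @cons_cons l₁ l₂ a h ih =>
      obtain ⟨idx, ⟨hso, hb⟩, hlen, hsub⟩ := ih
      refine ⟨0 :: idx.map (· + 1), ⟨?_, ?_⟩, by simp [hlen], ?_⟩
      · refine List.Pairwise.cons ?_ (hso.map _ (fun x y hxy => by omega))
        intro y hy
        simp only [List.mem_map] at hy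
        obtain ⟨u, hu, rfl⟩ := hy
        omega
      · intro t ht
        simp only [List.mem_cons, List.mem_map] at ht
        rcases ht with rfl | ⟨u, hu, rfl⟩
        · simp
        · have := hb u hu; simp; omega
      · unfold subseqAt at hsub ⊢
        simp only [List.map_cons, List.map_map]
        rw [List.getD_cons_zero]
        have hc : ((fun t => (a :: l₂).getD t 0) ∘ fun x => x + 1)
            = fun t => l₂.getD t 0 := by
          funext t; exact List.getD_cons_succ
        rw [hc, hsub]
lemma no_two (w : Word) (k m : ℕ)
    (hmax : ∀ s : Word, s.Sublist w → IsPlateauRC k s → s.length ≤ m)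
    (I J : List ℕ) (hI : embeds w I) (hJ : embeds w J)
    (hlI : I.length = m) (hlJ : J.length = m)
    (hrc : IsPlateauRC k (subseqAt w I))
    (heq : subseqAt w I = subseqAt w J)
    (d : ℕ) (hdI : d < I.length) (hdJ : d < J.length)
    (hlt : I[d] < J[d]) : False := by
  obtain ⟨hIs, hIb⟩ := hI
  obtain ⟨hJs, hJb⟩ := hJ
  set L := I.take (d+1) ++ J.drop d with hL
  have hIpair := List.pairwise_iff_getElem.mp hIs
  have hJpair := List.pairwise_iff_getElem.mp hJs
  have hsort : L.Pairwise (· < ·) := by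
    rw [hL]
    apply List.pairwise_append.mpr
    refine ⟨List.Pairwise.sublist (List.take_sublist _ _) hIs, List.Pairwise.sublist (List.drop_sublist _ _) hJs, ?_⟩
    intro x hx y hy
    obtain ⟨a, ha, rfl⟩ := List.mem_iff_getElem.mp hx
    obtain ⟨b, hb, rfl⟩ := List.mem_iff_getElem.mp hy
    rw [List.getElem_take]
    rw [List.getElem_drop]
    have ha' : a ≤ d := by simp at ha; omega
    have hx' : I[a] ≤ I[d] := by
      rcases Nat.eq_or_lt_of_le ha' with rfl | ha2
      · exact le_rfl
      · exact le_of_lt (hIpair a d (by omega) hdI ha2)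
    have hb' : d + b < J.length := by simp at hb; omega
    have hy' : J[d] ≤ J[d + b] := by
      rcases Nat.eq_zero_or_pos b with rfl | hb2
      · simp
      · exact le_of_lt (hJpair d (d + b) hdJ hb' (by omega))
    omega
  have hbound : ∀ t ∈ L, t < w.length := by
    intro t ht
    rw [hL, List.mem_append] at ht
    rcases ht with ht | ht
    · exact hIb t (List.mem_of_mem_take ht)
    · exact hJb t (List.mem_of_mem_drop ht)
  have hslen : (subseqAt w I).length = m := by simp [subseqAt, hlI]
  have hsubL : subseqAt w L = (subseqAt w I).take (d+1) ++ (subseqAt w I).drop d := by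
    have heq' : J.map (fun t => w.getD t 0) = I.map (fun t => w.getD t 0) := heq.symm
    rw [hL]
    unfold subseqAt
    rw [List.map_append, List.map_take, List.map_drop, heq']
  have hLlen : (subseqAt w L).length = m + 1 := by
    rw [hsubL]
    simp [hslen]
    omega
  have hrc' : IsPlateauRC k (subseqAt w L) := by
    rw [hsubL]
    exact isPlateauRC_dup hrc (by omega)
  have := hmax (subseqAt w L) (subseqAt_sublist ⟨hsort, hbound⟩) hrc'
  omega

/-- the maximum-length plateau-k-rollercoaster subsequences of
`w` are in bijection with the index sequences embedding them, via the map
sending an index sequence to the word it spells. -/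
theorem stmt18 (w : Word) (k m : ℕ) (hk : 3 ≤ k)
    (hmax : ∀ s : Word, s.Sublist w → IsPlateauRC k s → s.length ≤ m)
    (hex : ∃ s : Word, s.Sublist w ∧ IsPlateauRC k s ∧ s.length = m) :
    ∃ f : {I : List ℕ // embeds w I ∧ I.length = m ∧
            IsPlateauRC k (subseqAt w I)} ≃
          {s : Word // s.Sublist w ∧ IsPlateauRC k s ∧ s.length = m},
      ∀ I, (f I : Word) = subseqAt w I := by
  classical
  have hg : ∀ I : {I : List ℕ // embeds w I ∧ I.length = m ∧ IsPlateauRC k (subseqAt w I)},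
      (subseqAt w I.1).Sublist w ∧ IsPlateauRC k (subseqAt w I.1) ∧
        (subseqAt w I.1).length = m := by
    intro ⟨I, hI, hlen, hrc⟩
    exact ⟨subseqAt_sublist hI, hrc, by simp [subseqAt, hlen]⟩
  refine ⟨Equiv.ofBijective (fun I => ⟨subseqAt w I.1, hg I⟩) ⟨?_, ?_⟩, fun I => rfl⟩
  · rintro ⟨I, hI, hlI, hrcI⟩ ⟨J, hJ, hlJ, hrcJ⟩ hIJ
    simp only [Subtype.mk.injEq] at hIJ ⊢
    by_contra hne
    have hlen : I.length = J.length := by omega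
    have hdex : ∃ d, ∃ (h1 : d < I.length), ∃ (h2 : d < J.length), I[d] ≠ J[d] := by
      by_contra hall
      push_neg at hall
      exact hne (List.ext_getElem hlen (fun d h1 h2 => hall d h1 h2))
    obtain ⟨d, h1, h2, hne'⟩ := hdex
    rcases hne'.lt_or_gt with hlt | hlt
    · exact no_two w k m hmax I J hI hJ hlI hlJ hrcI hIJ d h1 h2 hlt
    · exact no_two w k m hmax J I hJ hI hlJ hlI (hIJ ▸ hrcI) hIJ.symm d h2 h1 hlt
  · rintro ⟨s, hsub, hrc, hlen⟩
    obtain ⟨I, hemb, hIlen, hIsub⟩ := exists_embedding hsub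
    exact ⟨⟨I, hemb, by omega, by rwa [hIsub]⟩, by simp [hIsub]⟩

end RollerCoaster
end
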